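/- Let Σ be a root system with invariant inner product (·,·), β the highest root, and δ a root with 2(β,δ)/(β,β) = 1 and (δ,δ) = (β,β). For a root γ and n ∈ ℤ write Σ_{γ,n} = {α ∈ Σ : 2(γ,α)/(γ,γ) = n}. Then Σ_{β,1} ∩ Σ_{δ,2} = {δ}. -/

import Mathlib

open scoped RealInnerProductSpace

/-- Abstract data of a (reduced, crystallographic) root system in a real inner
product space, together with a choice of positive system. -/
structure RootSystemData (V : Type*) [NormedAddCommGroup V] [InnerProductSpace ℝ V] where
  roots : Set V
  pos : Set V
  finite : roots.Finite
  ne_zero : ∀ α ∈ roots, α ≠ 0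
  neg_mem : ∀ α ∈ roots, -α ∈ roots
  pos_subset : pos ⊆ roots
  pos_or_neg : ∀ α ∈ roots, (α ∈ pos ∧ -α ∉ pos) ∨ (α ∉ pos ∧ -α ∈ pos)
  reflect_mem : ∀ α ∈ roots, ∀ γ ∈ roots, γ - (2 * ⟪α, γ⟫ / ⟪α, α⟫) • α ∈ roots
  integral : ∀ α ∈ roots, ∀ γ ∈ roots, ∃ n : ℤ, 2 * ⟪α, γ⟫ / ⟪α, α⟫ = (n : ℝ)
  reduced : ∀ α ∈ roots, ∀ t : ℝ, t • α ∈ roots → t = 1 ∨ t = -1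
  pos_add : ∀ α ∈ pos, ∀ γ ∈ pos, α + γ ∈ roots → α + γ ∈ pos

variable {V : Type*} [NormedAddCommGroup V] [InnerProductSpace ℝ V]

/-- `Σ_{γ,n} = {α ∈ Σ : 2(γ,α)/(γ,γ) = n}`. -/
def RootSystemData.level (R : RootSystemData V) (γ : V) (n : ℤ) : Set V :=
  {α ∈ R.roots | 2 * ⟪γ, α⟫ / ⟪γ, γ⟫ = (n : ℝ)}

/-- `β` is the highest root: it is positive, of maximal length, and no `β + α`
with `α` positive is again a root. -/
def RootSystemData.IsHighest (R : RootSystemData V) (β : V) : Prop :=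
  β ∈ R.pos ∧ (∀ α ∈ R.roots, ⟪α, α⟫ ≤ ⟪β, β⟫) ∧ ∀ α ∈ R.pos, β + α ∉ R.roots


/-- `Σ_{β,1} ∩ Σ_{δ,2} = {δ}`. -/
theorem level_beta_one_inter_delta_two (R : RootSystemData V) (β δ : V)
    (hβ : R.IsHighest β) (hδ : δ ∈ R.roots)
    (hδ1 : 2 * ⟪β, δ⟫ / ⟪β, β⟫ = 1) (hδ2 : ⟪δ, δ⟫ = ⟪β, β⟫) :
    R.level β 1 ∩ R.level δ 2 = {δ} := by
  have hδ0 : δ ≠ 0 := R.ne_zero δ hδ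
  have hδn : (0:ℝ) < ‖δ‖ := norm_pos_iff.mpr hδ0
  have hδδ : ⟪δ, δ⟫ = ‖δ‖ ^ 2 := real_inner_self_eq_norm_sq δ
  ext α
  simp only [Set.mem_inter_iff, RootSystemData.level, Set.mem_setOf_eq,
    Set.mem_singleton_iff]
  constructor
  · rintro ⟨⟨hα, -⟩, -, hα2⟩
    -- From hα2 : 2 * ⟪δ, α⟫ / ⟪δ, δ⟫ = 2 we get ⟪δ, α⟫ = ‖δ‖ ^ 2
    have hδδ0 : ⟪δ, δ⟫ ≠ 0 := by rw [hδδ]; positivity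
    have hinner : ⟪δ, α⟫ = ‖δ‖ ^ 2 := by
      have : 2 * ⟪δ, α⟫ = 2 * ⟪δ, δ⟫ := by
        field_simp at hα2
        push_cast at hα2
        linarith [hα2]
      rw [← hδδ]; linarith
    -- ‖α‖ ≤ ‖δ‖ since β is longest and ‖δ‖ = ‖β‖
    have hle : ‖α‖ ≤ ‖δ‖ := by
      have h1 : ⟪α, α⟫ ≤ ⟪β, β⟫ := hβ.2.1 α hα
      have h2 : ‖α‖ ^ 2 ≤ ‖δ‖ ^ 2 := by
        rw [← real_inner_self_eq_norm_sq, ← real_inner_self_eq_norm_sq]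
        rw [hδ2]; exact h1
      nlinarith [norm_nonneg α, norm_nonneg δ]
    -- Cauchy-Schwarz equality
    have hcs : ⟪δ, α⟫ ≤ ‖δ‖ * ‖α‖ := real_inner_le_norm δ α
    have hnorm : ‖α‖ = ‖δ‖ := by nlinarith [hinner, hcs]
    have heq : ⟪δ, α⟫ = ‖δ‖ * ‖α‖ := by rw [hnorm]; nlinarith [hinner]
    have := (inner_eq_norm_mul_iff_real).mp heq
    -- ‖α‖ • δ = ‖δ‖ • α
    rw [hnorm] at this
    have := smul_right_injective V (ne_of_gt hδn) this
    exact this.symm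
  · rintro rfl
    refine ⟨⟨hδ, by simpa using hδ1⟩, hδ, ?_⟩
    have h0 : ⟪α, α⟫ ≠ 0 := by rw [hδδ]; positivity
    rw [mul_div_assoc, div_self h0]; norm_num
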